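/- Let H be a Hilbert space and let u, w ∈ B(H) be contractions (‖u‖ ≤ 1 and ‖w‖ ≤ 1) such that u w u = u and w u w = w. Then u is a partial isometry and w = u* (the Hilbert space adjoint of u). -/

import Mathlib

set_option autoImplicit false

open ContinuousLinearMap in
/-- If `v` is a contraction and `‖v x‖ = ‖x‖`, then `v* v x = x`. -/
lemma contraction_isometric_adjoint_apply
    {H : Type*} [NormedAddCommGroup H] [InnerProductSpace ℂ H] [CompleteSpace H]
    (v : H →L[ℂ] H) (hv : ‖v‖ ≤ 1) (x : H) (hx : ‖v x‖ = ‖x‖) :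
    ContinuousLinearMap.adjoint v (v x) = x := by
  set y := ContinuousLinearMap.adjoint v (v x) with hy
  have hadj : ‖ContinuousLinearMap.adjoint v‖ = ‖v‖ :=
    ContinuousLinearMap.adjoint.norm_map v
  have h1 : ‖y‖ ≤ ‖x‖ := by
    calc ‖y‖ ≤ ‖ContinuousLinearMap.adjoint v‖ * ‖v x‖ := le_opNorm _ _
    _ ≤ 1 * ‖x‖ := by rw [hadj, hx]; exact mul_le_mul_of_nonneg_right hv (norm_nonneg x)
    _ = ‖x‖ := one_mul _
  have h2 : RCLike.re (inner (𝕜 := ℂ) y x) = ‖x‖ ^ 2 := by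
    rw [hy, ContinuousLinearMap.adjoint_inner_left, ← hx]
    exact inner_self_eq_norm_sq (𝕜 := ℂ) (v x)
  have h3 : ‖y - x‖ ^ 2 ≤ 0 := by
    rw [@norm_sub_sq ℂ, h2]
    nlinarith [norm_nonneg y, norm_nonneg x]
  have h4 : y - x = 0 := by
    have h5 := norm_nonneg (y - x)
    have h6 : ‖y - x‖ = 0 := by nlinarith
    exact norm_eq_zero.mp h6
  exact sub_eq_zero.mp h4

/-- if `u, w` are contractions on a Hilbert space `H` with
`u w u = u` and `w u w = w`, then `u` is a partial isometry (isometric on the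
orthogonal complement of its kernel) and `w = u*`. -/
theorem contraction_generalized_inverse_partialIsometry
    {H : Type*} [NormedAddCommGroup H] [InnerProductSpace ℂ H] [CompleteSpace H]
    (u w : H →L[ℂ] H) (hu : ‖u‖ ≤ 1) (hw : ‖w‖ ≤ 1)
    (huwu : u * w * u = u) (hwuw : w * u * w = w) :
    (∀ x ∈ (LinearMap.ker (u : H →ₗ[ℂ] H))ᗮ, ‖u x‖ = ‖x‖) ∧ w = ContinuousLinearMap.adjoint u := by
  -- pointwise versions of the algebraic identities
  have h1 : ∀ x, u (w (u x)) = u x := fun x => by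
    have := ContinuousLinearMap.ext_iff.mp huwu x
    simpa [ContinuousLinearMap.mul_apply] using this
  have h2 : ∀ x, w (u (w x)) = w x := fun x => by
    have := ContinuousLinearMap.ext_iff.mp hwuw x
    simpa [ContinuousLinearMap.mul_apply] using this
  -- if `x` is fixed by `w ∘ u`, then `u` is isometric at `x`
  have hnu : ∀ x : H, w (u x) = x → ‖u x‖ = ‖x‖ := by
    intro x hfix
    have hle : ‖u x‖ ≤ ‖x‖ := by
      calc ‖u x‖ ≤ ‖u‖ * ‖x‖ := ContinuousLinearMap.le_opNorm _ _
      _ ≤ 1 * ‖x‖ := mul_le_mul_of_nonneg_right hu (norm_nonneg x)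
      _ = ‖x‖ := one_mul _
    have hge : ‖x‖ ≤ ‖u x‖ := by
      conv_lhs => rw [← hfix]
      calc ‖w (u x)‖ ≤ ‖w‖ * ‖u x‖ := ContinuousLinearMap.le_opNorm _ _
      _ ≤ 1 * ‖u x‖ := mul_le_mul_of_nonneg_right hw (norm_nonneg _)
      _ = ‖u x‖ := one_mul _
    linarith
  have hnw : ∀ x : H, u (w x) = x → ‖w x‖ = ‖x‖ := by
    intro x hfix
    have hle : ‖w x‖ ≤ ‖x‖ := by
      calc ‖w x‖ ≤ ‖w‖ * ‖x‖ := ContinuousLinearMap.le_opNorm _ _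
      _ ≤ 1 * ‖x‖ := mul_le_mul_of_nonneg_right hw (norm_nonneg x)
      _ = ‖x‖ := one_mul _
    have hge : ‖x‖ ≤ ‖w x‖ := by
      conv_lhs => rw [← hfix]
      calc ‖u (w x)‖ ≤ ‖u‖ * ‖w x‖ := ContinuousLinearMap.le_opNorm _ _
      _ ≤ 1 * ‖w x‖ := mul_le_mul_of_nonneg_right hu (norm_nonneg _)
      _ = ‖w x‖ := one_mul _
    linarith
  -- u* u = w u  pointwise
  have hA : ∀ x, ContinuousLinearMap.adjoint u (u x) = w (u x) := by
    intro x
    have hfix : w (u (w (u x))) = w (u x) := by rw [h1 x]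
    have hiso : ‖u (w (u x))‖ = ‖w (u x)‖ := hnu _ hfix
    have := contraction_isometric_adjoint_apply u hu (w (u x)) hiso
    rwa [h1 x] at this
  -- w* w = u w  pointwise
  have hB : ∀ x, ContinuousLinearMap.adjoint w (w x) = u (w x) := by
    intro x
    have hfix : u (w (u (w x))) = u (w x) := h1 (w x)
    have hiso : ‖w (u (w x))‖ = ‖u (w x)‖ := hnw _ hfix
    have := contraction_isometric_adjoint_apply w hw (u (w x)) hiso
    rwa [h2 x] at this
  have hAop : ContinuousLinearMap.adjoint u * u = w * u :=
    ContinuousLinearMap.ext fun x => hA x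
  have hBop : ContinuousLinearMap.adjoint w * w = u * w :=
    ContinuousLinearMap.ext fun x => hB x
  -- u w is self-adjoint since it equals w* w
  have hq : ContinuousLinearMap.adjoint (u * w) = u * w := by
    rw [← hBop]
    simp only [← ContinuousLinearMap.star_eq_adjoint, star_mul, star_star]
  -- w = u*
  have hadj : w = ContinuousLinearMap.adjoint u := by
    have : ContinuousLinearMap.adjoint u
        = ContinuousLinearMap.adjoint u * (u * w) := by
      conv_lhs => rw [← huwu]
      simp only [← ContinuousLinearMap.star_eq_adjoint, star_mul]
      rw [← star_mul u w, ContinuousLinearMap.star_eq_adjoint (u * w), hq]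
    calc w = w * u * w := hwuw.symm
    _ = (ContinuousLinearMap.adjoint u * u) * w := by rw [hAop]
    _ = ContinuousLinearMap.adjoint u * (u * w) := mul_assoc _ _ _
    _ = ContinuousLinearMap.adjoint u := this.symm
  refine ⟨?_, hadj⟩
  intro x hx
  set y := x - w (u x) with hy
  have hyk : u y = 0 := by
    rw [hy]; simp [map_sub, h1 x]
  have hinner1 : inner (𝕜 := ℂ) y x = 0 :=
    (Submodule.mem_orthogonal _ _).mp hx y (LinearMap.mem_ker.mpr hyk)
  have hinner2 : inner (𝕜 := ℂ) y (w (u x)) = 0 := by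
    rw [← hA x, ContinuousLinearMap.adjoint_inner_right, hyk, inner_zero_left]
  have hyy : inner (𝕜 := ℂ) y y = 0 := by
    have : inner (𝕜 := ℂ) y y = inner (𝕜 := ℂ) y x - inner (𝕜 := ℂ) y (w (u x)) := by
      rw [hy]; rw [inner_sub_right]
    rw [this, hinner1, hinner2, sub_zero]
  have hy0 : y = 0 := inner_self_eq_zero.mp hyy
  have hfix : w (u x) = x := by
    have := sub_eq_zero.mp (hy.symm ▸ hy0 : x - w (u x) = 0)
    exact this.symm
  exact hnu x hfix
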